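/- Let p > 1 and let f : ℕ → ℝ≥0 be a concave non-decreasing function with property (C_p) and C := ∑_{n=1}^∞ (1/n)(f(n)/n)^p. Let m₁ < m₂ < ⋯ < m_{2k} be natural numbers with m₁ ≥ 1, and suppose additionally m_{2i} ≤ 2·m_{2i-1} for each i. Then ∑_{i=1}^k (f(m_{2i-1})/m_{2i-1})^p · (m_{2i} - m_{2i-1})/m_{2i-1} ≤ 2^{p+1}·C. -/

import Mathlib

/-- Lemma 2.3 (second part): if moreover `m_{2i} ≤ 2 m_{2i-1}` then
`∑ᵢ (f(m_{2i-1})/m_{2i-1})^p (m_{2i}-m_{2i-1})/m_{2i-1} ≤ 2^{p+1} C`.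
Here `m 0 < m 1 < ⋯ < m (2k-1)` encodes `m₁ < ⋯ < m_{2k}`. -/
theorem stmt4 (p : ℝ) (hp : 1 < p) (f : ℕ → ℝ) (hf0 : ∀ n, 0 ≤ f n)
    (hmono : Monotone f)
    (hconc : ∀ m n : ℕ, m ≤ n → f (n + m) - f n ≤ f n - f (n - m))
    (hsum : Summable (fun n : ℕ => (1 / ((n : ℝ) + 1)) * (f (n + 1) / ((n : ℝ) + 1)) ^ p))
    (k : ℕ) (m : ℕ → ℕ) (hm1 : 1 ≤ m 0)
    (hmlt : ∀ i : ℕ, i + 1 < 2 * k → m i < m (i + 1))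
    (hdouble : ∀ i : ℕ, i < k → m (2 * i + 1) ≤ 2 * m (2 * i)) :
    ∑ i ∈ Finset.range k,
        (f (m (2 * i)) / (m (2 * i) : ℝ)) ^ p *
          (((m (2 * i + 1) : ℝ) - (m (2 * i) : ℝ)) / (m (2 * i) : ℝ))
      ≤ 2 ^ (p + 1) * ∑' n : ℕ, (1 / ((n : ℝ) + 1)) * (f (n + 1) / ((n : ℝ) + 1)) ^ p := by
  set a : ℕ → ℝ := fun n => (1 / ((n : ℝ) + 1)) * (f (n + 1) / ((n : ℝ) + 1)) ^ p with ha
  have ha0 : ∀ n, 0 ≤ a n := fun n =>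
    mul_nonneg (by positivity) (Real.rpow_nonneg (div_nonneg (hf0 _) (by positivity)) p)
  have hp0 : (0:ℝ) ≤ p := by linarith
  -- monotonicity of m on indices < 2k
  have hmono' : ∀ i j : ℕ, i ≤ j → j < 2 * k → m i ≤ m j := by
    intro i j hij hj
    induction hij with
    | refl => exact le_rfl
    | @step n hn ih => exact (ih (by omega)).trans (hmlt n (by omega)).le
  have hM1 : ∀ i : ℕ, i < k → 1 ≤ m (2 * i) := fun i hi =>
    hm1.trans (hmono' 0 (2 * i) (Nat.zero_le _) (by omega))
  -- the intervals
  set t : ℕ → Finset ℕ := fun i => Finset.Ico (m (2 * i) - 1) (m (2 * i + 1) - 1) with ht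
  -- per-interval bound
  have key : ∀ i ∈ Finset.range k,
      (f (m (2 * i)) / (m (2 * i) : ℝ)) ^ p *
          (((m (2 * i + 1) : ℝ) - (m (2 * i) : ℝ)) / (m (2 * i) : ℝ))
        ≤ 2 ^ (p + 1) * ∑ n ∈ t i, a n := by
    intro i hi
    rw [Finset.mem_range] at hi
    set M := m (2 * i) with hM
    set N := m (2 * i + 1) with hN
    have h1M : 1 ≤ M := hM1 i hi
    have hMN : M < N := hmlt (2 * i) (by omega)
    have hN2M : N ≤ 2 * M := hdouble i hi
    have hMpos : (0:ℝ) < M := by exact_mod_cast h1M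
    set c : ℝ := (1 / (2 * (M:ℝ))) * (f M / (2 * (M:ℝ))) ^ p with hc
    have hterm : ∀ n ∈ t i, c ≤ a n := by
      intro n hn
      rw [ht, Finset.mem_Ico] at hn
      have h1 : M ≤ n + 1 := by omega
      have h2 : n + 1 ≤ 2 * M := by omega
      have h1' : (M:ℝ) ≤ (n:ℝ) + 1 := by exact_mod_cast h1
      have h2' : (n:ℝ) + 1 ≤ 2 * M := by exact_mod_cast h2
      have hnpos : (0:ℝ) < (n:ℝ) + 1 := by positivity
      have e1 : 1 / (2 * (M:ℝ)) ≤ 1 / ((n:ℝ) + 1) :=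
        one_div_le_one_div_of_le hnpos h2'
      have e2 : f M / (2 * (M:ℝ)) ≤ f (n + 1) / ((n:ℝ) + 1) := by
        apply div_le_div₀ (hf0 _) (hmono h1) hnpos h2'
      have e2' : (f M / (2 * (M:ℝ))) ^ p ≤ (f (n + 1) / ((n:ℝ) + 1)) ^ p :=
        Real.rpow_le_rpow (div_nonneg (hf0 _) (by positivity)) e2 hp0
      exact mul_le_mul e1 e2' (Real.rpow_nonneg (div_nonneg (hf0 _) (by positivity)) p)
        (by positivity)
    have hcard : ((t i).card : ℝ) = (N:ℝ) - M := by
      rw [ht]; simp only [Nat.card_Ico]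
      have : (N - 1) - (M - 1) = N - M := by omega
      rw [this, Nat.cast_sub hMN.le]
    have hsum1 : ((N:ℝ) - M) * c ≤ ∑ n ∈ t i, a n := by
      calc ((N:ℝ) - M) * c = ∑ _n ∈ t i, c := by
            rw [Finset.sum_const, nsmul_eq_mul, hcard]
        _ ≤ ∑ n ∈ t i, a n := Finset.sum_le_sum hterm
    have hEq : (f M / (M:ℝ)) ^ p * (((N:ℝ) - M) / M) = 2 ^ (p + 1) * (((N:ℝ) - M) * c) := by
      have h2p : (0:ℝ) < (2:ℝ) ^ p := Real.rpow_pos_of_pos two_pos p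
      have hd : f M / (2 * (M:ℝ)) = (f M / M) / 2 := by ring
      rw [hc, hd, Real.div_rpow (div_nonneg (hf0 _) hMpos.le) (by norm_num),
        Real.rpow_add two_pos, Real.rpow_one]
      field_simp
    rw [hEq]
    exact mul_le_mul_of_nonneg_left hsum1 (by positivity)
  -- disjointness
  have key2 : ∀ i j : ℕ, j < k → i < j → Disjoint (t i) (t j) := by
    intro i j hj h
    have hle : m (2 * i + 1) ≤ m (2 * j) :=
      hmono' (2 * i + 1) (2 * j) (by omega) (by omega)
    simp only [ht, Finset.disjoint_left, Finset.mem_Ico]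
    intro n hn hn'
    omega
  have hdisj : (Finset.range k : Set ℕ).PairwiseDisjoint t := by
    intro i hi j hj hij
    simp only [Finset.coe_range, Set.mem_Iio] at hi hj
    rcases lt_or_gt_of_ne hij with h | h
    · exact key2 i j hj h
    · exact (key2 j i hi h).symm
  calc ∑ i ∈ Finset.range k,
        (f (m (2 * i)) / (m (2 * i) : ℝ)) ^ p *
          (((m (2 * i + 1) : ℝ) - (m (2 * i) : ℝ)) / (m (2 * i) : ℝ))
      ≤ ∑ i ∈ Finset.range k, 2 ^ (p + 1) * ∑ n ∈ t i, a n := Finset.sum_le_sum key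
    _ = 2 ^ (p + 1) * ∑ i ∈ Finset.range k, ∑ n ∈ t i, a n := by
        rw [Finset.mul_sum]
    _ = 2 ^ (p + 1) * ∑ n ∈ (Finset.range k).biUnion t, a n := by
        rw [Finset.sum_biUnion hdisj]
    _ ≤ 2 ^ (p + 1) * ∑' n : ℕ, a n := by
        apply mul_le_mul_of_nonneg_left _ (by positivity)
        exact Summable.sum_le_tsum _ (fun n _ => ha0 n) hsum
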